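/- The function g attains its infimum on D: there exists a pair (c₁*, c₂*) ∈ D such that g(c₁*, c₂*) ≤ g(c₁, c₂) for all (c₁, c₂) ∈ D. (In particular, the infimum of g over D is not approached only as c₁ → ∞, as c₂ → ∞, or as (c₁,c₂) approaches the line c₂ = c₁ + β.) -/

import Mathlib

theorem stmt_0
    (H H' : ℝ → ℝ)
    (hHcont : ContinuousOn H (Set.Ici 0))
    (hHderiv : ∀ x ∈ Set.Ioi (0:ℝ), HasDerivAt H (H' x) x)
    (hH'pos : ∀ x ∈ Set.Ioi (0:ℝ), 0 < H' x)
    (hH'cont : ContinuousOn H' (Set.Ici 0))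
    (hH'top : Filter.Tendsto H' Filter.atTop Filter.atTop)
    (β : ℝ) (hβ : 0 < β)
    :
    ∃ c₁ c₂ : ℝ, (0 ≤ c₁ ∧ c₁ + β < c₂) ∧
      ∀ d₁ d₂ : ℝ, 0 ≤ d₁ → d₁ + β < d₂ →
        (H c₂ - H c₁) / (c₂ - c₁ - β) ≤ (H d₂ - H d₁) / (d₂ - d₁ - β) := by
  -- H is strictly monotone on [0, ∞)
  have hmono : StrictMonoOn H (Set.Ici 0) := by
    apply strictMonoOn_of_deriv_pos (convex_Ici 0) hHcont
    intro x hx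
    rw [interior_Ici] at hx
    rw [(hHderiv x hx).deriv]
    exact hH'pos x hx
  have hmono' : MonotoneOn H (Set.Ici 0) := hmono.monotoneOn
  -- Mean value theorem helper
  have mvt : ∀ a b : ℝ, 0 ≤ a → a < b →
      ∃ ξ ∈ Set.Ioo a b, H b - H a = H' ξ * (b - a) := by
    intro a b ha hab
    obtain ⟨ξ, hξ, hslope⟩ := exists_hasDerivAt_eq_slope H H' hab
      (hHcont.mono (fun x hx => le_trans ha hx.1))
      (fun x hx => hHderiv x (lt_of_le_of_lt ha hx.1))
    refine ⟨ξ, hξ, ?_⟩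
    rw [hslope, div_mul_cancel₀ _ (sub_ne_zero.mpr hab.ne')]
  set g₀ := H (β + 1) - H 0 with hg₀def
  have hg₀ : 0 < g₀ := sub_pos.mpr
    (hmono (Set.mem_Ici.mpr (le_refl (0:ℝ))) (Set.mem_Ici.mpr (by positivity : (0:ℝ) ≤ β + 1)) (by linarith))
  -- Find M beyond which H' ≥ g₀ + 1
  obtain ⟨M₀, hM₀⟩ := Filter.eventually_atTop.1 (hH'top.eventually_ge_atTop (g₀ + 1))
  set M := max M₀ 1 with hMdef
  have hM1 : (1:ℝ) ≤ M := le_max_right _ _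
  have hM : ∀ x, M ≤ x → g₀ + 1 ≤ H' x := fun x hx =>
    hM₀ x (le_trans (le_max_left _ _) hx)
  -- δ : positive lower bound for H(x+β) − H(x) on [0, M]
  have hφcont : ContinuousOn (fun x => H (x + β) - H x) (Set.Icc 0 M) := by
    apply ContinuousOn.sub
    · exact hHcont.comp ((continuous_id.add continuous_const).continuousOn)
        (fun x hx => by simpa using by linarith [hx.1, hβ.le] : _)
    · exact hHcont.mono (fun x hx => hx.1)
  obtain ⟨x₀, hx₀mem, hx₀min⟩ := isCompact_Icc.exists_isMinOn
    (Set.nonempty_Icc.mpr (by linarith)) hφcont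
  set δ := H (x₀ + β) - H x₀ with hδdef
  have hδpos : 0 < δ := sub_pos.mpr
    (hmono hx₀mem.1 (by simp; linarith [hx₀mem.1]) (by linarith))
  have hδ : ∀ x ∈ Set.Icc (0:ℝ) M, δ ≤ H (x + β) - H x :=
    fun x hx => isMinOn_iff.mp hx₀min x hx
  set ε := min 1 (δ / (g₀ + 1)) with hεdef
  have hεpos : 0 < ε := lt_min one_pos (by positivity)
  have hε1 : ε ≤ 1 := min_le_left _ _
  have hεK : ε * (g₀ + 1) ≤ δ := by
    have := min_le_right 1 (δ / (g₀ + 1))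
    rw [← le_div_iff₀ (by positivity)]
    exact this
  set N := (g₀ + 1) * M + β + 1 with hNdef
  have hMN : M < N := by nlinarith
  -- Compact set S
  set S : Set (ℝ × ℝ) := (Set.Icc 0 M ×ˢ Set.Icc β N) ∩ {p | p.1 + β + ε ≤ p.2}
    with hSdef
  have hScompact : IsCompact S := (isCompact_Icc.prod isCompact_Icc).inter_right
    (isClosed_le (by fun_prop) continuous_snd)
  have hSne : ((0:ℝ), β + 1) ∈ S := by
    refine ⟨⟨⟨le_refl 0, show (0:ℝ) ≤ M by linarith⟩,
      ⟨show β ≤ β + 1 by linarith, show β + 1 ≤ N by nlinarith⟩⟩,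
      show (0:ℝ) + β + ε ≤ β + 1 by linarith⟩
  set G : ℝ × ℝ → ℝ := fun p => (H p.2 - H p.1) / (p.2 - p.1 - β) with hGdef
  have hden : ∀ p ∈ S, ε ≤ p.2 - p.1 - β := by
    intro p hp
    have := hp.2
    simp only [Set.mem_setOf_eq] at this
    linarith
  have hGcont : ContinuousOn G S := by
    apply ContinuousOn.div
    · exact (hHcont.comp continuous_snd.continuousOn
        (fun p hp => le_trans hβ.le hp.1.2.1)).sub
        (hHcont.comp continuous_fst.continuousOn (fun p hp => hp.1.1.1))
    · exact ((continuous_snd.sub continuous_fst).sub continuous_const).continuousOn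
    · intro p hp
      have := hden p hp
      exact (by linarith : (0:ℝ) < p.2 - p.1 - β).ne'
  obtain ⟨⟨c₁, c₂⟩, hcmem, hcmin⟩ := hScompact.exists_isMinOn ⟨_, hSne⟩ hGcont
  have hc₁ : 0 ≤ c₁ := hcmem.1.1.1
  have hc₁M : c₁ ≤ M := hcmem.1.1.2
  have hc₂N : c₂ ≤ N := hcmem.1.2.2
  have hcε : c₁ + β + ε ≤ c₂ := hcmem.2
  refine ⟨c₁, c₂, ⟨hc₁, by linarith⟩, ?_⟩
  -- value of G at base point is g₀
  have hmle : G (c₁, c₂) ≤ g₀ := by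
    have h := isMinOn_iff.mp hcmin _ hSne
    have : G ((0:ℝ), β + 1) = g₀ := by
      simp only [hGdef]
      have : (β + 1 : ℝ) - 0 - β = 1 := by ring
      rw [this, div_one]
    linarith [h]
  intro d₁ d₂ hd₁ hd₂
  have hdenpos : 0 < d₂ - d₁ - β := by linarith
  by_cases h1 : d₁ ≤ M
  · by_cases h3 : d₁ + β + ε ≤ d₂
    · by_cases h2 : d₂ ≤ N
      · -- in S : minimality applies
        exact isMinOn_iff.mp hcmin (d₁, d₂)
          ⟨⟨⟨hd₁, h1⟩, ⟨by linarith, h2⟩⟩, h3⟩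
      · -- d₂ > N : use MVT on [M, d₂]
        push_neg at h2
        obtain ⟨ξ, hξ, heq⟩ := mvt M d₂ (by linarith) (by linarith)
        have hK : g₀ + 1 ≤ H' ξ := hM ξ hξ.1.le
        have hmle2 : H d₁ ≤ H M := hmono' (by exact hd₁) (by simp; linarith) h1
        refine le_trans hmle ?_
        rw [le_div_iff₀ hdenpos]
        have hsl : (g₀ + 1) * (d₂ - M) ≤ H' ξ * (d₂ - M) :=
          mul_le_mul_of_nonneg_right hK (by linarith)
        nlinarith [mul_nonneg hg₀.le hd₁, mul_nonneg hg₀.le hβ.le,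
          mul_nonneg hg₀.le (by linarith : (0:ℝ) ≤ M)]
    · -- close to the line: d₂ < d₁ + β + ε
      push_neg at h3
      have hnum : δ ≤ H d₂ - H d₁ := by
        have h1' : δ ≤ H (d₁ + β) - H d₁ := hδ d₁ ⟨hd₁, h1⟩
        have h2' : H (d₁ + β) ≤ H d₂ := hmono' (by simp; linarith) (by simp; linarith)
          (by linarith)
        linarith
      refine le_trans hmle ?_
      rw [le_div_iff₀ hdenpos]
      nlinarith [mul_nonneg hg₀.le hdenpos.le]
  · -- d₁ > M : use MVT on [d₁, d₂]
    push_neg at h1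
    obtain ⟨ξ, hξ, heq⟩ := mvt d₁ d₂ hd₁ (by linarith)
    have hK : g₀ + 1 ≤ H' ξ := hM ξ (by linarith [hξ.1])
    refine le_trans hmle ?_
    rw [le_div_iff₀ hdenpos]
    have hsl : (g₀ + 1) * (d₂ - d₁) ≤ H' ξ * (d₂ - d₁) :=
      mul_le_mul_of_nonneg_right hK (by linarith)
    nlinarith [mul_nonneg hg₀.le hβ.le]
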